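/- Let L be a finite lattice and let S be the set of all admissible operation sequences on L, ordered by (fᵢ) ⊑ (gᵢ) iff fᵢ(α₁,...,αᵢ) ≤ gᵢ(α₁,...,αᵢ) for all i and all αⱼ. Then S is at most countable, and (S, ⊑) has no infinite descending chains and no infinite antichains. -/

import Mathlib

/-- An operation sequence on a lattice `L`: `f n` is the `(n+1)`-ary operation,
so `f n` corresponds to the paper's `f_{n+1}`. -/
def OpSeq (L : Type) : Type := ∀ n : ℕ, (Fin (n + 1) → L) → L

/-- Admissibility: (HC1), (HC2), (HC3), (HC4), (HC7), (HC8). -/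
def IsAdmissible {L : Type} [CompleteLattice L] (f : OpSeq L) : Prop :=
  -- (HC1)
  (∀ n (α : Fin (n + 1) → L) (k : Fin (n + 1)), f n α ≤ α k) ∧
  -- (HC2) monotonicity
  (∀ n (α β : Fin (n + 1) → L), α ≤ β → f n α ≤ f n β) ∧
  -- (HC3)
  (∀ n (α : Fin (n + 2) → L), f (n + 1) α ≤ f n (fun i => α i.succ)) ∧
  -- (HC4) symmetry
  (∀ n (α : Fin (n + 1) → L) (π : Equiv.Perm (Fin (n + 1))), f n (α ∘ π) = f n α) ∧
  -- (HC7) join distributivity in each argument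
  (∀ n (i : Fin (n + 1)) (α : Fin (n + 1) → L) (S : Set L),
      f n (Function.update α i (sSup S)) = ⨆ b ∈ S, f n (Function.update α i b)) ∧
  -- (HC8)
  (∀ n k (hkn : k ≤ n) (α : Fin (n + 1) → L),
      f k (fun i : Fin (k + 1) =>
        if hi : (i : ℕ) < k then α ⟨i.1, by omega⟩
        else f (n - k) (fun j : Fin (n - k + 1) => α ⟨k + j.1, by have := j.2; omega⟩)) ≤
      f n α)

/-- `(δ, ε)` is a splitting pair. -/
def IsSplittingPair {L : Type} [Lattice L] [BoundedOrder L] (δ ε : L) : Prop :=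
  δ < ⊤ ∧ ⊥ < ε ∧ ∀ α : L, ε ≤ α ∨ α ≤ δ

/-- `L` splits. -/
def Splits (L : Type) [Lattice L] [BoundedOrder L] : Prop :=
  ∃ δ ε : L, IsSplittingPair δ ε

/-- `L` splits strongly. -/
def SplitsStrongly (L : Type) [Lattice L] [BoundedOrder L] : Prop :=
  ∃ δ ε : L, IsSplittingPair δ ε ∧ ε ≤ δ


set_option linter.unusedSectionVars false
set_option maxHeartbeats 1000000

open scoped Classical

namespace AdmAux

variable {L : Type} [Finite L]

noncomputable local instance : Fintype L := Fintype.ofFinite L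

local instance : IsWellOrder ℕ∞ (· < ·) := isWellOrder_lt

local instance : IsWellOrder ℕ (· < ·) := isWellOrder_lt

noncomputable def cnt {n : ℕ} (α : Fin n → L) : L → ℕ := fun a => ∑ i, if α i = a then 1 else 0

lemma cnt_comp_equiv {m n : ℕ} (α : Fin n → L) (π : Fin m ≃ Fin n) :
    cnt (α ∘ π) = cnt α := by
  funext a
  exact Fintype.sum_equiv π _ _ fun i => rfl

lemma sum_cnt {n : ℕ} (α : Fin n → L) : ∑ a, cnt α a = n := by
  unfold cnt
  rw [Finset.sum_comm]
  have : ∀ i : Fin n, (∑ a : L, if α i = a then 1 else 0) = 1 := by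
    intro i; simp
  simp [this]

lemma cnt_succ {n : ℕ} (α : Fin (n + 1) → L) (a : L) :
    cnt α a = cnt (fun i : Fin n => α i.succ) a + (if α 0 = a then 1 else 0) := by
  unfold cnt
  rw [Fin.sum_univ_succ]
  ring

lemma card_fiber {n : ℕ} (α : Fin n → L) (a : L) :
    Fintype.card {i // α i = a} = cnt α a := by
  rw [Fintype.card_subtype]
  rw [Finset.card_filter]
  rfl

lemma perm_of_cnt_eq {n : ℕ} (α β : Fin n → L) (h : cnt α = cnt β) :
    ∃ π : Equiv.Perm (Fin n), α = β ∘ π := by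
  have e : ∀ a : L, {i // α i = a} ≃ {i // β i = a} := fun a =>
    Fintype.equivOfCardEq (by rw [card_fiber, card_fiber, h])
  refine ⟨(Equiv.sigmaFiberEquiv α).symm.trans ((Equiv.sigmaCongrRight e).trans
    (Equiv.sigmaFiberEquiv β)), ?_⟩
  funext i
  simp only [Function.comp_apply, Equiv.trans_apply, Equiv.sigmaCongrRight_apply]
  exact ((e (α i)) ⟨i, rfl⟩).2.symm

lemma exists_tuple_aux (N : ℕ) : ∀ (v : L → ℕ), (∑ a, v a) = N → ∃ α : Fin N → L, cnt α = v := by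
  induction N with
  | zero =>
    intro v hv
    refine ⟨Fin.elim0, ?_⟩
    funext a
    have : v a = 0 := by
      have := Finset.sum_eq_zero_iff.mp hv
      exact this a (Finset.mem_univ a)
    simp [cnt, this]
  | succ N ih =>
    intro v hv
    have : ∃ a₀, v a₀ ≠ 0 := by
      by_contra hc
      push_neg at hc
      simp [hc] at hv
    obtain ⟨a₀, ha₀⟩ := this
    set v' := Function.update v a₀ (v a₀ - 1) with hv'
    have hsum : ∑ a, v' a = N := by
      have h1 : ∑ a, v' a = (v a₀ - 1) + ∑ a ∈ Finset.univ.erase a₀, v a := by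
        rw [hv']
        rw [← Finset.add_sum_erase _ _ (Finset.mem_univ a₀)]
        congr 1
        · simp
        · apply Finset.sum_congr rfl
          intro x hx
          rw [Function.update_of_ne (Finset.ne_of_mem_erase hx)]
      have h2 : ∑ a, v a = v a₀ + ∑ a ∈ Finset.univ.erase a₀, v a := by
        rw [← Finset.add_sum_erase _ _ (Finset.mem_univ a₀)]
      omega
    obtain ⟨β, hβ⟩ := ih v' hsum
    refine ⟨Fin.cons (α := fun _ => L) a₀ β, ?_⟩
    funext a
    rw [cnt_succ]
    have htail : (fun i : Fin N => Fin.cons (α := fun _ => L) a₀ β i.succ) = β := by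
      funext i; simp
    rw [htail, hβ, Fin.cons_zero]
    by_cases hc : a = a₀
    · subst hc; simp [hv']; omega
    · simp only [if_neg (Ne.symm hc), add_zero, hv']
      rw [Function.update_of_ne hc]

lemma exists_tuple (v : L → ℕ) : ∃ α : Fin (∑ a, v a) → L, cnt α = v :=
  exists_tuple_aux _ v rfl

/-! ### Key lemma for admissible sequences -/

variable [CompleteLattice L]

lemma key_le {F : OpSeq L} (hF : IsAdmissible F) :
    ∀ m n (α : Fin (n + 1) → L) (β : Fin (m + 1) → L), cnt α ≤ cnt β → F m β ≤ F n α := by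
  obtain ⟨-, -, hF3, hF4, -, -⟩ := hF
  intro m
  induction m using Nat.strong_induction_on with
  | _ m IH =>
    intro n α β hle
    by_cases hc : cnt α = cnt β
    · have hn : n = m := by
        have h1 := sum_cnt α
        have h2 := sum_cnt β
        rw [hc] at h1
        omega
      subst hn
      obtain ⟨π, hπ⟩ := perm_of_cnt_eq α β hc
      rw [hπ, hF4 n β π]
    · have hstrict : ∃ a, cnt α a < cnt β a := by
        by_contra hc2
        push_neg at hc2
        exact hc (funext fun a => le_antisymm (hle a) (hc2 a))
      obtain ⟨a, ha⟩ := hstrict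
      have hm1 : 1 ≤ m := by
        have h1 := sum_cnt α
        have h2 := sum_cnt β
        have : ∑ x, cnt α x < ∑ x, cnt β x :=
          Finset.sum_lt_sum (fun x _ => hle x) ⟨a, Finset.mem_univ a, ha⟩
        omega
      obtain ⟨k, rfl⟩ : ∃ k, m = k + 1 := ⟨m - 1, by omega⟩
      have hfib : ∃ i₀, β i₀ = a := by
        by_contra hno
        push_neg at hno
        have : cnt β a = 0 := by
          unfold cnt
          exact Finset.sum_eq_zero fun i _ => if_neg (hno i)
        omega
      obtain ⟨i₀, hi₀⟩ := hfib
      set π : Equiv.Perm (Fin (k + 2)) := Equiv.swap 0 i₀ with hπdef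
      set β' : Fin (k + 2) → L := β ∘ π with hβ'def
      have hcβ' : cnt β' = cnt β := cnt_comp_equiv β π
      have hβ'0 : β' 0 = a := by
        rw [hβ'def]
        simp [hπdef, Equiv.swap_apply_left, hi₀]
      set γ : Fin (k + 1) → L := fun i => β' i.succ with hγdef
      have hcntγ : cnt α ≤ cnt γ := by
        intro b
        have hsp := cnt_succ β' b
        rw [hcβ', ← hγdef] at hsp
        by_cases hb : b = a
        · subst hb
          rw [if_pos hβ'0] at hsp
          exact Nat.lt_succ_iff.mp (ha.trans_eq hsp)
        · rw [if_neg (by rw [hβ'0]; exact fun h => hb h.symm)] at hsp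
          exact (hle b).trans (le_of_eq (hsp.trans (Nat.add_zero _)))
      calc F (k + 1) β = F (k + 1) β' := (hF4 (k + 1) β π).symm
        _ ≤ F k γ := hF3 k β'
        _ ≤ F n α := IH k (by omega) n α γ hcntγ

lemma key_eq {F : OpSeq L} (hF : IsAdmissible F) {n m : ℕ}
    (α : Fin (n + 1) → L) (β : Fin (m + 1) → L) (h : cnt α = cnt β) : F n α = F m β :=
  le_antisymm (key_le hF n m β α h.ge) (key_le hF m n α β h.le)

/-- the trace of `F` on count vectors -/
noncomputable def vaL (F : OpSeq L) (v : L → ℕ) : L :=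
  if h : ∑ a, v a = 0 then ⊤
  else F (∑ a, v a - 1)
    ((exists_tuple v).choose ∘ Fin.cast (by omega))

lemma cnt_cast {m n : ℕ} (α : Fin n → L) (h : m = n) :
    cnt (α ∘ Fin.cast h) = cnt α := cnt_comp_equiv α (finCongr h)

lemma vaL_spec {F : OpSeq L} (hF : IsAdmissible F) (n : ℕ) (α : Fin (n + 1) → L) :
    F n α = vaL F (cnt α) := by
  have hsum : ∑ a, cnt α a = n + 1 := sum_cnt α
  rw [vaL, dif_neg (by omega)]
  apply key_eq hF
  rw [cnt_cast _ _, (exists_tuple (cnt α)).choose_spec]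

lemma vaL_antitone {F : OpSeq L} (hF : IsAdmissible F) : Antitone (vaL F) := by
  intro v w hvw
  by_cases hw : ∑ a, w a = 0
  · have hv : ∑ a, v a = 0 := by
      have : ∀ a, v a ≤ w a := hvw
      have := Finset.sum_le_sum (fun a (_ : a ∈ Finset.univ) => this a)
      omega
    simp only [vaL]
    rw [dif_pos hw, dif_pos hv]
  · by_cases hv : ∑ a, v a = 0
    · simp only [vaL]; rw [dif_pos hv]; exact le_top
    · simp only [vaL]; rw [dif_neg hw, dif_neg hv]
      apply key_le hF
      rw [cnt_cast _ _, cnt_cast _ _, (exists_tuple v).choose_spec, (exists_tuple w).choose_spec]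
      exact hvw

lemma vaL_le_iff {F G : OpSeq L} (hF : IsAdmissible F) (hG : IsAdmissible G) :
    (∀ n (α : Fin (n + 1) → L), F n α ≤ G n α) ↔ vaL F ≤ vaL G := by
  constructor
  · intro h v
    by_cases hv : ∑ a, v a = 0
    · simp only [vaL]; rw [dif_pos hv, dif_pos hv]
    · simp only [vaL]; rw [dif_neg hv, dif_neg hv]
      exact h _ _
  · intro h n α
    rw [vaL_spec hF n α, vaL_spec hG n α]
    exact h (cnt α)

lemma vaL_inj {F G : OpSeq L} (hF : IsAdmissible F) (hG : IsAdmissible G)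
    (h : vaL F = vaL G) : F = G := by
  funext n α
  rw [vaL_spec hF n α, vaL_spec hG n α, h]


/-- box in `(L → ℕ)` with corner `c : L → ℕ∞` -/
def Bx (c : L → ℕ∞) : Set (L → ℕ) := {v | ∀ a, (v a : ℕ∞) ≤ c a}

lemma Bx_mono {c c' : L → ℕ∞} (h : c ≤ c') : Bx c ⊆ Bx c' :=
  fun _ hv a => (hv a).trans (h a)

lemma mem_Bx_coe (v : L → ℕ) : v ∈ Bx (fun a => (v a : ℕ∞)) := fun _ => le_rfl

lemma Bx_coe_subset {D : Set (L → ℕ)} (hD : IsLowerSet D) {v : L → ℕ} (hv : v ∈ D) :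
    Bx (fun a => (v a : ℕ∞)) ⊆ D := by
  intro u hu
  exact hD (fun a => by simpa using hu a) hv

lemma enat_exists_of_le_sSup (S : Set ℕ∞) (hS : S.Nonempty) (n : ℕ) (h : (n : ℕ∞) ≤ sSup S) :
    ∃ y ∈ S, (n : ℕ∞) ≤ y := by
  by_contra hc
  push_neg at hc
  cases n with
  | zero =>
    obtain ⟨y, hy⟩ := hS
    exact absurd (hc y hy) (by simp)
  | succ k =>
    have hub : sSup S ≤ (k : ℕ∞) := by
      apply sSup_le
      intro y hy
      have hlt := hc y hy
      cases y using ENat.recTopCoe with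
      | top => exact absurd hlt (by simp)
      | coe j =>
        have : j < k + 1 := by exact_mod_cast hlt
        exact_mod_cast Nat.lt_succ_iff.mp this
    have : (k + 1 : ℕ) ≤ k := by exact_mod_cast h.trans hub
    omega

lemma chain_box (D : Set (L → ℕ)) (c : Set (L → ℕ∞)) (hchain : IsChain (· ≤ ·) c)
    (hsub : ∀ x ∈ c, Bx x ⊆ D) (hne : c.Nonempty) :
    ∃ ub, Bx ub ⊆ D ∧ ∀ z ∈ c, z ≤ ub := by
  refine ⟨fun a => sSup ((fun x => x a) '' c), ?_, ?_⟩
  · intro v hv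
    have key : ∀ t : Finset L, ∃ x ∈ c, ∀ a ∈ t, (v a : ℕ∞) ≤ x a := by
      intro t
      induction t using Finset.induction_on with
      | empty =>
        obtain ⟨x, hx⟩ := hne
        exact ⟨x, hx, by simp⟩
      | @insert a t ha ih =>
        obtain ⟨x₁, hx₁, h₁⟩ := ih
        obtain ⟨y, hy, hvy⟩ := enat_exists_of_le_sSup _ (hne.image _) (v a) (hv a)
        obtain ⟨x₂, hx₂, rfl⟩ := hy
        obtain ⟨x₃, hx₃, h₁₃, h₂₃⟩ := hchain.directedOn x₁ hx₁ x₂ hx₂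
        refine ⟨x₃, hx₃, ?_⟩
        intro b hb
        rcases Finset.mem_insert.mp hb with rfl | hb
        · exact hvy.trans (h₂₃ b)
        · exact (h₁ b hb).trans (h₁₃ b)
    obtain ⟨x, hxc, hx⟩ := key Finset.univ
    exact hsub x hxc (fun a => hx a (Finset.mem_univ a))
  · intro z hz a
    exact le_sSup ⟨z, hz, rfl⟩

lemma exists_box_decomp (D : Set (L → ℕ)) (hD : IsLowerSet D) :
    ∃ s : Finset (L → ℕ∞), D = ⋃ c ∈ s, Bx c := by
  set T : Set (L → ℕ∞) := {c | Bx c ⊆ D} with hT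
  set M : Set (L → ℕ∞) := {c | Maximal (· ∈ T) c} with hM
  have hMsubT : M ⊆ T := fun c hc => hc.1
  have hManti : IsAntichain (· ≤ ·) M :=
    fun c hc c' hc' hne hle => hne (le_antisymm hle (hc.2 hc'.1 hle))
  have hMfin : M.Finite := hManti.finite_of_partiallyWellOrderedOn (Set.isPWO_of_wellQuasiOrderedLE M)
  refine ⟨hMfin.toFinset, ?_⟩
  apply subset_antisymm
  · intro v hv
    have hvT : (fun a => (v a : ℕ∞)) ∈ T := Bx_coe_subset hD hv
    obtain ⟨m, hle, hmax⟩ := zorn_le_nonempty₀ T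
      (fun ch hchT hchain y hy => by
        obtain ⟨ub, h1, h2⟩ := chain_box D ch hchain (fun x hx => hchT hx) ⟨y, hy⟩
        exact ⟨ub, h1, h2⟩)
      (fun a => (v a : ℕ∞)) hvT
    simp only [Set.mem_iUnion, Set.Finite.mem_toFinset]
    exact ⟨m, hmax, Bx_mono hle (mem_Bx_coe v)⟩
  · intro v hv
    simp only [Set.mem_iUnion, Set.Finite.mem_toFinset] at hv
    obtain ⟨c, hcM, hvc⟩ := hv
    exact hMsubT hcM hvc

lemma sublistForall₂_mem {α : Type*} {r : α → α → Prop} {l₁ l₂ : List α}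
    (h : List.SublistForall₂ r l₁ l₂) : ∀ c ∈ l₁, ∃ c' ∈ l₂, r c c' := by
  induction h with
  | nil => simp
  | cons hr h ih =>
    intro c hc
    rcases List.mem_cons.mp hc with rfl | hc
    · exact ⟨_, List.mem_cons_self, hr⟩
    · obtain ⟨c', hc', hrc⟩ := ih c hc
      exact ⟨c', List.mem_cons_of_mem _ hc', hrc⟩
  | cons_right h ih =>
    intro c hc
    obtain ⟨c', hc', hrc⟩ := ih c hc
    exact ⟨c', List.mem_cons_of_mem _ hc', hrc⟩

lemma lowersets_pwo :
    {D : Set (L → ℕ) | IsLowerSet D}.PartiallyWellOrderedOn (· ⊆ ·) := by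
  rw [Set.partiallyWellOrderedOn_iff_exists_lt]
  intro f hf
  have hdec : ∀ i, ∃ s : Finset (L → ℕ∞), f i = ⋃ c ∈ s, Bx c :=
    fun i => exists_box_decomp _ (hf i)
  choose s hs using hdec
  have hig := Set.PartiallyWellOrderedOn.partiallyWellOrderedOn_sublistForall₂
    (r := ((· ≤ ·) : (L → ℕ∞) → (L → ℕ∞) → Prop)) (Set.isPWO_of_wellQuasiOrderedLE (Set.univ : Set (L → ℕ∞)))
  obtain ⟨m, n, hmn, hr⟩ := hig.exists_lt (f := fun i => (s i).toList) (fun i x _ => Set.mem_univ x)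
  refine ⟨m, n, hmn, ?_⟩
  rw [hs m, hs n]
  intro v hv
  simp only [Set.mem_iUnion] at hv ⊢
  obtain ⟨c, hc, hvc⟩ := hv
  obtain ⟨c', hc', hcc'⟩ := sublistForall₂_mem hr c (Finset.mem_toList.mpr hc)
  exact ⟨c', Finset.mem_toList.mp hc', Bx_mono hcc' hvc⟩

lemma lowersets_dcc (D : ℕ → Set (L → ℕ)) (hlow : ∀ i, IsLowerSet (D i))
    (hdec : ∀ i, D (i + 1) ⊆ D i) (hne : ∀ i, D (i + 1) ≠ D i) : False := by
  have hstrict : ∀ i, ∃ v, v ∈ D i ∧ v ∉ D (i + 1) := by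
    intro i
    by_contra h
    push_neg at h
    exact hne i (subset_antisymm (hdec i) (fun v hv => h v hv))
  choose x hx1 hx2 using hstrict
  have hanti : Antitone D := antitone_nat_of_succ_le hdec
  obtain ⟨m, n, hmn, hle⟩ := (Set.isPWO_of_wellQuasiOrderedLE (Set.univ : Set (L → ℕ))).exists_lt (f := x) (fun i => Set.mem_univ _)
  have hxn : x n ∈ D (m + 1) := hanti (show m + 1 ≤ n from hmn) (hx1 n)
  exact hx2 m (hlow (m + 1) hle hxn)

lemma pwo_pi {ι β : Type} [Fintype ι] (r : β → β → Prop) [IsRefl β r] [IsTrans β r] (s : Set β)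
    (hs : s.PartiallyWellOrderedOn r) (f : ℕ → ι → β) (hf : ∀ n i, f n i ∈ s) :
    ∃ m n, m < n ∧ ∀ i, r (f m i) (f n i) := by
  suffices h : ∀ l : List ι, ∃ φ : ℕ ↪o ℕ,
      ∀ i ∈ l, ∀ m n : ℕ, m ≤ n → r (f (φ m) i) (f (φ n) i) by
    obtain ⟨φ, hφ⟩ := h Finset.univ.toList
    exact ⟨φ 0, φ 1, φ.strictMono Nat.zero_lt_one,
      fun i => hφ i (by simp) 0 1 (by omega)⟩
  intro l
  induction l with
  | nil => exact ⟨RelEmbedding.refl (· ≤ ·), by simp⟩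
  | cons a l ih =>
    obtain ⟨φ, hφ⟩ := ih
    haveI : IsPreorder β r := { refl := refl_of r, trans := fun _ _ _ => trans_of r }
    obtain ⟨ψ, hψ⟩ := hs.exists_monotone_subseq (f := fun k => f (φ k) a) (fun k => hf (φ k) a)
    refine ⟨ψ.trans φ, ?_⟩
    intro i hi m n hmn
    rcases List.mem_cons.mp hi with rfl | hi
    · exact hψ m n hmn
    · exact hφ i hi (ψ m) (ψ n) (ψ.monotone hmn)


lemma isLowerSet_level {F : OpSeq L} (hF : IsAdmissible F) (ℓ : L) :
    IsLowerSet {v : L → ℕ | ℓ ≤ vaL F v} :=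
  fun _v _w hwv hv => le_trans hv (vaL_antitone hF hwv)

lemma countable_admissible : {F : OpSeq L | IsAdmissible F}.Countable := by
  rw [← Set.countable_coe_iff]
  -- encode an admissible F by, for each ℓ, a finite set of boxes describing the level set of vaL F
  set enc : {F : OpSeq L | IsAdmissible F} → (L → Finset (L → ℕ∞)) := fun F ℓ =>
    (exists_box_decomp {v : L → ℕ | ℓ ≤ vaL F.1 v} (isLowerSet_level F.2 ℓ)).choose with henc
  have hinj : Function.Injective enc := by
    intro F G h
    have hlevel : ∀ ℓ : L, {v : L → ℕ | ℓ ≤ vaL F.1 v} = {v : L → ℕ | ℓ ≤ vaL G.1 v} := by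
      intro ℓ
      have h1 := (exists_box_decomp {v : L → ℕ | ℓ ≤ vaL F.1 v} (isLowerSet_level F.2 ℓ)).choose_spec
      have h2 := (exists_box_decomp {v : L → ℕ | ℓ ≤ vaL G.1 v} (isLowerSet_level G.2 ℓ)).choose_spec
      rw [h1, h2]
      have := congrFun h ℓ
      rw [henc] at this
      simp only at this
      rw [this]
    have hval : vaL F.1 = vaL G.1 := by
      funext v
      have h1 : v ∈ {w : L → ℕ | vaL F.1 v ≤ vaL F.1 w} := le_refl _
      rw [hlevel (vaL F.1 v)] at h1
      have h2 : v ∈ {w : L → ℕ | vaL G.1 v ≤ vaL G.1 w} := le_refl _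
      rw [← hlevel (vaL G.1 v)] at h2
      exact le_antisymm h1 h2
    exact Subtype.ext (vaL_inj F.2 G.2 hval)
  exact hinj.countable

lemma no_descending (f : ℕ → OpSeq L) (hadm : ∀ i, IsAdmissible (f i))
    (hdec : ∀ i n (α : Fin (n + 1) → L), f (i + 1) n α ≤ f i n α)
    (hne : ∀ i, f (i + 1) ≠ f i) : False := by
  set h : ℕ → (L → ℕ) → L := fun i => vaL (f i) with hh
  have hmono : ∀ i, h (i + 1) ≤ h i :=
    fun i => (vaL_le_iff (hadm (i + 1)) (hadm i)).mp (hdec i)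
  have hanti : Antitone h := antitone_nat_of_succ_le hmono
  have hdiff : ∀ i, ∃ ℓ, ∃ v, v ∈ {w : L → ℕ | ℓ ≤ h i w} ∧
      v ∉ {w : L → ℕ | ℓ ≤ h (i + 1) w} := by
    intro i
    have : h (i + 1) ≠ h i := fun e => hne i (vaL_inj (hadm (i + 1)) (hadm i) e)
    have : ∃ v, h (i + 1) v ≠ h i v := by
      by_contra hcon
      push_neg at hcon
      exact this (funext hcon)
    obtain ⟨v, hv⟩ := this
    refine ⟨h i v, v, le_refl _, fun hcon => ?_⟩
    exact hv (le_antisymm (hmono i v) hcon)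
  choose g w hw1 hw2 using hdiff
  obtain ⟨ℓ, hℓ⟩ := Finite.exists_infinite_fiber g
  have hSinf : {i | g i = ℓ}.Infinite := by
    rw [← Set.infinite_coe_iff] at *
    exact hℓ
  set p : ℕ → Prop := fun i => g i = ℓ with hp
  have hnth_mem : ∀ k, p (Nat.nth p k) := fun k => Nat.nth_mem_of_infinite hSinf k
  have hnth_mono : StrictMono (Nat.nth p) := Nat.nth_strictMono hSinf
  apply lowersets_dcc (fun k => {v : L → ℕ | ℓ ≤ h (Nat.nth p k) v})
  · intro k
    exact isLowerSet_level (hadm _) ℓ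
  · intro k v hv
    exact le_trans hv (hanti (le_of_lt (hnth_mono (Nat.lt_succ_self k))) v)
  · intro k hcon
    have hgk : g (Nat.nth p k) = ℓ := hnth_mem k
    have hv1 : w (Nat.nth p k) ∈ {v : L → ℕ | ℓ ≤ h (Nat.nth p k) v} := by
      have := hw1 (Nat.nth p k)
      rwa [hgk] at this
    have hv2 : w (Nat.nth p k) ∉ {v : L → ℕ | ℓ ≤ h (Nat.nth p k + 1) v} := by
      have := hw2 (Nat.nth p k)
      rwa [hgk] at this
    apply hv2
    have hmem : w (Nat.nth p k) ∈ {v : L → ℕ | ℓ ≤ h (Nat.nth p (k + 1)) v} := by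
      rw [hcon]; exact hv1
    exact le_trans hmem (hanti (Nat.succ_le_of_lt (hnth_mono (Nat.lt_succ_self k))) _)

lemma antichain_finite (C : Set (OpSeq L)) (hadm : ∀ F ∈ C, IsAdmissible F)
    (hanti : IsAntichain (fun F G : OpSeq L => ∀ n (α : Fin (n + 1) → L), F n α ≤ G n α) C) :
    C.Finite := by
  by_contra hinf
  have hinf2 : C.Infinite := hinf
  set e := hinf2.natEmbedding with he
  set F : ℕ → OpSeq L := fun i => (e i).1 with hF
  have hFadm : ∀ i, IsAdmissible (F i) := fun i => hadm _ (e i).2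
  obtain ⟨m, n, hmn, hsub⟩ := pwo_pi (ι := L) (β := Set (L → ℕ)) (· ⊆ ·)
    {D : Set (L → ℕ) | IsLowerSet D} lowersets_pwo
    (fun i ℓ => {v : L → ℕ | ℓ ≤ vaL (F i) v})
    (fun i ℓ => isLowerSet_level (hFadm i) ℓ)
  have hval : vaL (F m) ≤ vaL (F n) := by
    intro v
    exact hsub (vaL (F m) v) (le_refl _)
  have hle : ∀ k (α : Fin (k + 1) → L), F m k α ≤ F n k α :=
    (vaL_le_iff (hFadm m) (hFadm n)).mpr hval
  have hne : F m ≠ F n := by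
    intro hcon
    exact hmn.ne (e.injective (Subtype.ext hcon))
  exact hanti (e m).2 (e n).2 hne hle

end AdmAux

theorem admissible_countable_dcc_no_infinite_antichain (L : Type) [CompleteLattice L]
    [Finite L] :
    {F : OpSeq L | IsAdmissible F}.Countable ∧
    (¬ ∃ f : ℕ → OpSeq L, (∀ i, IsAdmissible (f i)) ∧
        (∀ i n (α : Fin (n + 1) → L), f (i + 1) n α ≤ f i n α) ∧
        (∀ i, f (i + 1) ≠ f i)) ∧
    (∀ C : Set (OpSeq L), (∀ F ∈ C, IsAdmissible F) →
      IsAntichain (fun F G : OpSeq L => ∀ n (α : Fin (n + 1) → L), F n α ≤ G n α) C →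
      C.Finite) := by
  refine ⟨AdmAux.countable_admissible, ?_, ?_⟩
  · rintro ⟨f, h1, h2, h3⟩
    exact AdmAux.no_descending f h1 h2 h3
  · exact AdmAux.antichain_finite
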